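/- arXiv:2408.00237 — 3 statements merged into one kernel-verified Lean document; each statement's English description precedes it below -/
import Mathlib

section
/- Let S be an M×N real matrix and let H be a positive integer with H ≥ rank(S). Then the nuclear norm of S satisfies ‖S‖_* = min{ (‖U‖_F² + ‖V‖_F²)/2 : U is M×H, V is N×H, and U Vᵀ = S }, and this minimum is attained by some pair (U, V). -/
open Matrix BigOperators

/-- The singular values of a real `M × N` matrix, sorted in decreasing order and
indexed by `Fin N` (the square roots of the eigenvalues of `XᵀX`). -/
noncomputable def svalAux {M N : ℕ} (X : Matrix (Fin M) (Fin N) ℝ) : Fin N → ℝ :=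
  fun r => Real.sqrt
    (((Matrix.isHermitian_conjTranspose_mul_self X).eigenvalues ∘
      Tuple.sort ((Matrix.isHermitian_conjTranspose_mul_self X).eigenvalues)) r.rev)

/-- The `r`-th singular value (0-indexed, decreasing) of a real matrix, `0` if `r ≥ N`. -/
noncomputable def sval {M N : ℕ} (X : Matrix (Fin M) (Fin N) ℝ) (r : ℕ) : ℝ :=
  if h : r < N then svalAux X ⟨r, h⟩ else 0

/-- Squared Frobenius norm. -/
noncomputable def frobSq {M N : ℕ} (X : Matrix (Fin M) (Fin N) ℝ) : ℝ :=
  ∑ i, ∑ j, (X i j) ^ 2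

/-- Nuclear norm: sum of the singular values. -/
noncomputable def nucNorm {M N : ℕ} (X : Matrix (Fin M) (Fin N) ℝ) : ℝ :=
  ∑ r ∈ Finset.range (min M N), sval X r

namespace NucAux

variable {M N : ℕ}

/-- Permutation putting the eigenvalues of `SᵀS` in decreasing order. -/
noncomputable def pm (S : Matrix (Fin M) (Fin N) ℝ) : Equiv.Perm (Fin N) :=
  Fin.revPerm.trans (Tuple.sort ((Matrix.isHermitian_conjTranspose_mul_self S).eigenvalues))

/-- Eigenvalues of `SᵀS` in decreasing order. -/
noncomputable def ev (S : Matrix (Fin M) (Fin N) ℝ) (r : Fin N) : ℝ :=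
  (Matrix.isHermitian_conjTranspose_mul_self S).eigenvalues (pm S r)

/-- Orthonormal eigenvectors of `SᵀS`, matching `ev`. -/
noncomputable def evec (S : Matrix (Fin M) (Fin N) ℝ) (r : Fin N) : Fin N → ℝ :=
  ⇑((Matrix.isHermitian_conjTranspose_mul_self S).eigenvectorBasis (pm S r))

lemma svalAux_eq (S : Matrix (Fin M) (Fin N) ℝ) (r : Fin N) :
    svalAux S r = Real.sqrt (ev S r) := rfl

lemma sval_coe (S : Matrix (Fin M) (Fin N) ℝ) (r : Fin N) :
    sval S (r : ℕ) = Real.sqrt (ev S r) := by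
  rw [sval, dif_pos r.isLt, Fin.eta]
  rfl

lemma ev_nonneg (S : Matrix (Fin M) (Fin N) ℝ) (r : Fin N) : 0 ≤ ev S r := by
  have h : Sᴴ = Sᵀ := by ext i j; simp [Matrix.conjTranspose_apply]
  have h2 : (Sᵀ * S).PosSemidef := by rw [← h]; exact Matrix.posSemidef_conjTranspose_mul_self S
  exact (Matrix.posSemidef_conjTranspose_mul_self S).eigenvalues_nonneg _

lemma mulVec_evec (S : Matrix (Fin M) (Fin N) ℝ) (r : Fin N) :
    (Sᵀ * S) *ᵥ evec S r = ev S r • evec S r :=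
  (Matrix.isHermitian_conjTranspose_mul_self S).mulVec_eigenvectorBasis (pm S r)

lemma evec_ortho (S : Matrix (Fin M) (Fin N) ℝ) (r s : Fin N) :
    ∑ k, evec S r k * evec S s k = if r = s then 1 else 0 := by
  set hA := Matrix.isHermitian_conjTranspose_mul_self S
  have hu : (star (hA.eigenvectorUnitary : Matrix (Fin N) (Fin N) ℝ)) *
      (hA.eigenvectorUnitary : Matrix (Fin N) (Fin N) ℝ) = 1 :=
    Matrix.mem_unitaryGroup_iff'.mp (hA.eigenvectorUnitary).2
  have := congrFun (congrFun hu (pm S r)) (pm S s)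
  simp only [Matrix.mul_apply, Matrix.star_apply, star_trivial,
    Matrix.IsHermitian.eigenvectorUnitary_apply, Matrix.one_apply] at this
  simpa [evec, EmbeddingLike.apply_eq_iff_eq] using this

lemma evec_complete (S : Matrix (Fin M) (Fin N) ℝ) (i j : Fin N) :
    ∑ r, evec S r i * evec S r j = if i = j then 1 else 0 := by
  set hA := Matrix.isHermitian_conjTranspose_mul_self S
  have hu : (hA.eigenvectorUnitary : Matrix (Fin N) (Fin N) ℝ) *
      (star (hA.eigenvectorUnitary : Matrix (Fin N) (Fin N) ℝ)) = 1 :=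
    Matrix.mem_unitaryGroup_iff.mp (hA.eigenvectorUnitary).2
  have h1 := congrFun (congrFun hu i) j
  simp only [Matrix.mul_apply, Matrix.star_apply, star_trivial,
    Matrix.IsHermitian.eigenvectorUnitary_apply, Matrix.one_apply] at h1
  calc ∑ r, evec S r i * evec S r j
      = ∑ t, ⇑(hA.eigenvectorBasis t) i * ⇑(hA.eigenvectorBasis t) j :=
        Equiv.sum_comp (pm S) (fun t => ⇑(hA.eigenvectorBasis t) i * ⇑(hA.eigenvectorBasis t) j)
    _ = if i = j then 1 else 0 := h1

lemma dot_Sv (S : Matrix (Fin M) (Fin N) ℝ) (r s : Fin N) :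
    ∑ i, (S *ᵥ evec S r) i * (S *ᵥ evec S s) i = ev S s * (if r = s then 1 else 0) := by
  have key : evec S r ⬝ᵥ ((Sᵀ * S) *ᵥ evec S s) = (S *ᵥ evec S r) ⬝ᵥ (S *ᵥ evec S s) := by
    rw [← Matrix.mulVec_mulVec, Matrix.dotProduct_mulVec, Matrix.vecMul_transpose]
  have h2 : ∑ i, (S *ᵥ evec S r) i * (S *ᵥ evec S s) i
      = ∑ j, evec S r j * ((Sᵀ * S) *ᵥ evec S s) j := key.symm
  rw [h2, mulVec_evec]
  simp only [Pi.smul_apply, smul_eq_mul]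
  rw [← evec_ortho S r s, Finset.mul_sum]
  congr 1; ext j; ring

lemma S_decomp (S : Matrix (Fin M) (Fin N) ℝ) (i : Fin M) (j : Fin N) :
    S i j = ∑ r, (S *ᵥ evec S r) i * evec S r j := by
  simp only [Matrix.mulVec, dotProduct, Finset.sum_mul]
  rw [Finset.sum_comm]
  have h1 : ∀ k, ∑ r, S i k * evec S r k * evec S r j = S i k * (if k = j then 1 else 0) := by
    intro k
    rw [← evec_complete S k j, Finset.mul_sum]
    congr 1; ext r; ring
  simp only [h1, mul_ite, mul_one, mul_zero, Finset.sum_ite_eq', Finset.mem_univ, if_true]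

lemma ev_eq_zero (S : Matrix (Fin M) (Fin N) ℝ) (r : Fin N) (hr : S.rank ≤ (r : ℕ)) :
    ev S r = 0 := by
  have hanti : Antitone (ev S) := by
    intro a b hab
    exact Tuple.monotone_sort ((Matrix.isHermitian_conjTranspose_mul_self S).eigenvalues)
      (Fin.rev_le_rev.mpr hab)
  by_contra hne
  have hcard : Fintype.card {a : Fin N // ev S a ≠ 0} = S.rank := by
    have e : {a : Fin N // ev S a ≠ 0} ≃
        {i : Fin N // (Matrix.isHermitian_conjTranspose_mul_self S).eigenvalues i ≠ 0} :=
      (pm S).subtypeEquiv (fun a => by simp [ev])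
    rw [Fintype.card_congr e,
      ← (Matrix.isHermitian_conjTranspose_mul_self S).rank_eq_card_non_zero_eigs]
    have h : Sᴴ = Sᵀ := by ext i j; simp [Matrix.conjTranspose_apply]
    rw [h, Matrix.rank_transpose_mul_self]
  have hsub : (Finset.Iic r) ⊆ Finset.univ.filter (fun a => ev S a ≠ 0) := by
    intro a ha
    simp only [Finset.mem_Iic] at ha
    simp only [Finset.mem_filter, Finset.mem_univ, true_and]
    intro h0
    exact hne (le_antisymm (h0 ▸ hanti ha) (ev_nonneg S r))
  have hc1 : (Finset.Iic r).card = (r : ℕ) + 1 := Fin.card_Iic r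
  have hc2 := Finset.card_le_card hsub
  rw [hc1, ← Fintype.card_subtype, hcard] at hc2
  omega

lemma Sv_eq_zero (S : Matrix (Fin M) (Fin N) ℝ) (r : Fin N) (h0 : ev S r = 0) :
    S *ᵥ evec S r = 0 := by
  have h := dot_Sv S r r
  rw [if_pos rfl, h0, zero_mul] at h
  funext i
  have hsq : ∀ i ∈ Finset.univ, 0 ≤ (S *ᵥ evec S r) i * (S *ᵥ evec S r) i :=
    fun i _ => mul_self_nonneg _
  have := (Finset.sum_eq_zero_iff_of_nonneg hsq).mp h i (Finset.mem_univ i)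
  have := mul_self_eq_zero.mp this
  simpa using this

/-- Range-juggling helper. -/
lemma sum_range_eq {H N : ℕ} (g : ℕ → ℝ) (h1 : ∀ n, N ≤ n → g n = 0)
    (h2 : ∀ n, H ≤ n → g n = 0) :
    ∑ n ∈ Finset.range H, g n = ∑ n ∈ Finset.range N, g n := by
  have a : ∑ n ∈ Finset.range H, g n = ∑ n ∈ Finset.range (max H N), g n :=
    Finset.sum_subset (Finset.range_subset_range.mpr (le_max_left H N))
      (fun n hn hn2 => h2 n (by simp only [Finset.mem_range] at hn hn2; omega))
  have b : ∑ n ∈ Finset.range N, g n = ∑ n ∈ Finset.range (max H N), g n :=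
    Finset.sum_subset (Finset.range_subset_range.mpr (le_max_right H N))
      (fun n hn hn2 => h1 n (by simp only [Finset.mem_range] at hn hn2; omega))
  rw [a, b]

lemma nucNorm_eq (S : Matrix (Fin M) (Fin N) ℝ) :
    nucNorm S = ∑ r : Fin N, Real.sqrt (ev S r) := by
  have hrankM : S.rank ≤ M := le_trans (Matrix.rank_le_card_height S) (by simp)
  have hstep : ∑ n ∈ Finset.range (min M N), sval S n = ∑ n ∈ Finset.range N, sval S n := by
    apply Finset.sum_subset (Finset.range_subset_range.mpr (min_le_right M N))
    intro n hn hn2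
    simp only [Finset.mem_range] at hn hn2
    have hMn : M ≤ n := by omega
    rw [sval, dif_pos hn, svalAux_eq]
    rw [ev_eq_zero S ⟨n, hn⟩ (le_trans hrankM hMn), Real.sqrt_zero]
  rw [nucNorm, hstep, ← Fin.sum_univ_eq_sum_range (fun n => sval S n) N]
  exact Finset.sum_congr rfl (fun r _ => sval_coe S r)


/-- fourth root -/
noncomputable def fr (x : ℝ) : ℝ := Real.sqrt (Real.sqrt x)

variable {M N : ℕ}

lemma fr_sq (x : ℝ) : fr x ^ 2 = Real.sqrt x := Real.sq_sqrt (Real.sqrt_nonneg x)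

lemma fr_ne (S : Matrix (Fin M) (Fin N) ℝ) (r : Fin N) (h : ev S r ≠ 0) : fr (ev S r) ≠ 0 := by
  have hpos : 0 < ev S r := lt_of_le_of_ne (ev_nonneg S r) (Ne.symm h)
  simp only [fr, ne_eq, Real.sqrt_eq_zero (Real.sqrt_nonneg _)]
  exact ne_of_gt (Real.sqrt_pos.mpr hpos)

lemma hcol (S : Matrix (Fin M) (Fin N) ℝ) (r : Fin N) (i : Fin M) (j : Fin N) :
    ((S *ᵥ evec S r) i / fr (ev S r)) * (fr (ev S r) * evec S r j)
      = (S *ᵥ evec S r) i * evec S r j := by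
  by_cases h0 : ev S r = 0
  · rw [Sv_eq_zero S r h0]; simp
  · have := fr_ne S r h0
    field_simp

lemma hUsq (S : Matrix (Fin M) (Fin N) ℝ) (r : Fin N) :
    ∑ i, ((S *ᵥ evec S r) i / fr (ev S r)) ^ 2 = Real.sqrt (ev S r) := by
  by_cases h0 : ev S r = 0
  · rw [Sv_eq_zero S r h0, h0]; simp
  · have hSv : ∑ i, (S *ᵥ evec S r) i ^ 2 = ev S r := by
      have := dot_Sv S r r
      rw [if_pos rfl, mul_one] at this
      rw [← this]
      exact Finset.sum_congr rfl (fun i _ => pow_two _)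
    simp only [div_pow]
    rw [← Finset.sum_div, hSv, fr_sq, Real.div_sqrt]

lemma hVsq (S : Matrix (Fin M) (Fin N) ℝ) (r : Fin N) :
    ∑ j, (fr (ev S r) * evec S r j) ^ 2 = Real.sqrt (ev S r) := by
  have ho := evec_ortho S r r
  rw [if_pos rfl] at ho
  have : ∑ j, (fr (ev S r) * evec S r j) ^ 2
      = fr (ev S r) ^ 2 * ∑ j, evec S r j * evec S r j := by
    rw [Finset.mul_sum]
    exact Finset.sum_congr rfl (fun j _ => by ring)
  rw [this, ho, mul_one, fr_sq]

lemma mem_part {H : ℕ} (S : Matrix (Fin M) (Fin N) ℝ) (hrank : S.rank ≤ H) :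
    ∃ (U : Matrix (Fin M) (Fin H) ℝ) (V : Matrix (Fin N) (Fin H) ℝ),
      U * Vᵀ = S ∧ nucNorm S = (frobSq U + frobSq V) / 2 := by
  have hHz : ∀ n (hn : n < N), H ≤ n → ev S ⟨n, hn⟩ = 0 :=
    fun n hn hHn => ev_eq_zero S ⟨n, hn⟩ (le_trans hrank hHn)
  refine ⟨fun i h => if hh : (h : ℕ) < N then (S *ᵥ evec S ⟨h, hh⟩) i / fr (ev S ⟨h, hh⟩) else 0,
    fun j h => if hh : (h : ℕ) < N then fr (ev S ⟨h, hh⟩) * evec S ⟨h, hh⟩ j else 0, ?_, ?_⟩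
  · ext i j
    erw [Matrix.mul_apply]
    change ∑ h : Fin H, (if hh : (h : ℕ) < N then (S *ᵥ evec S ⟨h, hh⟩) i / fr (ev S ⟨h, hh⟩) else 0) *
      (if hh : (h : ℕ) < N then fr (ev S ⟨h, hh⟩) * evec S ⟨h, hh⟩ j else 0) = S i j
    have e1 : ∀ h : Fin H,
        (if hh : (h : ℕ) < N then (S *ᵥ evec S ⟨h, hh⟩) i / fr (ev S ⟨h, hh⟩) else 0) *
        (if hh : (h : ℕ) < N then fr (ev S ⟨h, hh⟩) * evec S ⟨h, hh⟩ j else 0) =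
        (fun n => if hn : n < N then (S *ᵥ evec S ⟨n, hn⟩) i * evec S ⟨n, hn⟩ j else 0) (h : ℕ) := by
      intro h
      by_cases hh : (h : ℕ) < N
      · simp only [dif_pos hh]; exact hcol S ⟨h, hh⟩ i j
      · simp only [dif_neg hh, mul_zero]
    rw [Finset.sum_congr rfl (fun h _ => e1 h),
      Fin.sum_univ_eq_sum_range (fun n => if hn : n < N then (S *ᵥ evec S ⟨n, hn⟩) i * evec S ⟨n, hn⟩ j else 0) H,
      sum_range_eq _ (fun n hn => dif_neg (not_lt.mpr hn)) ?_,
      ← Fin.sum_univ_eq_sum_range]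
    · have : ∀ r : Fin N,
          (fun n => if hn : n < N then (S *ᵥ evec S ⟨n, hn⟩) i * evec S ⟨n, hn⟩ j else 0) (r : ℕ)
          = (S *ᵥ evec S r) i * evec S r j := by
        intro r; simp only [dif_pos r.isLt, Fin.eta]
      rw [Finset.sum_congr rfl (fun r _ => this r)]
      exact (S_decomp S i j).symm
    · intro n hHn
      by_cases hn : n < N
      · simp only [dif_pos hn]
        rw [Sv_eq_zero S ⟨n, hn⟩ (hHz n hn hHn)]
        simp
      · exact dif_neg hn
  · have hU : (frobSq fun (i : Fin M) (h : Fin H) =>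
        if hh : (h : ℕ) < N then (S *ᵥ evec S ⟨h, hh⟩) i / fr (ev S ⟨h, hh⟩) else 0) = nucNorm S := by
      unfold frobSq; rw [Finset.sum_comm, nucNorm_eq]
      have e1 : ∀ h : Fin H, ∑ i : Fin M,
          (if hh : (h : ℕ) < N then (S *ᵥ evec S ⟨h, hh⟩) i / fr (ev S ⟨h, hh⟩) else 0) ^ 2
          = (fun n => if hn : n < N then Real.sqrt (ev S ⟨n, hn⟩) else 0) (h : ℕ) := by
        intro h
        by_cases hh : (h : ℕ) < N
        · simp only [dif_pos hh]; exact hUsq S ⟨h, hh⟩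
        · simp only [dif_neg hh]; simp
      rw [Finset.sum_congr rfl (fun h _ => e1 h),
        Fin.sum_univ_eq_sum_range (fun n => if hn : n < N then Real.sqrt (ev S ⟨n, hn⟩) else 0) H,
        sum_range_eq _ (fun n hn => dif_neg (not_lt.mpr hn))
          (fun n hHn => by
            by_cases hn : n < N
            · simp only [dif_pos hn, hHz n hn hHn, Real.sqrt_zero]
            · exact dif_neg hn),
        ← Fin.sum_univ_eq_sum_range]
      exact Finset.sum_congr rfl (fun r _ => by simp only [dif_pos r.isLt, Fin.eta])
    have hV : (frobSq fun (j : Fin N) (h : Fin H) =>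
        if hh : (h : ℕ) < N then fr (ev S ⟨h, hh⟩) * evec S ⟨h, hh⟩ j else 0) = nucNorm S := by
      unfold frobSq; rw [Finset.sum_comm, nucNorm_eq]
      have e1 : ∀ h : Fin H, ∑ j : Fin N,
          (if hh : (h : ℕ) < N then fr (ev S ⟨h, hh⟩) * evec S ⟨h, hh⟩ j else 0) ^ 2
          = (fun n => if hn : n < N then Real.sqrt (ev S ⟨n, hn⟩) else 0) (h : ℕ) := by
        intro h
        by_cases hh : (h : ℕ) < N
        · simp only [dif_pos hh]; exact hVsq S ⟨h, hh⟩
        · simp only [dif_neg hh]; simp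
      rw [Finset.sum_congr rfl (fun h _ => e1 h),
        Fin.sum_univ_eq_sum_range (fun n => if hn : n < N then Real.sqrt (ev S ⟨n, hn⟩) else 0) H,
        sum_range_eq _ (fun n hn => dif_neg (not_lt.mpr hn))
          (fun n hHn => by
            by_cases hn : n < N
            · simp only [dif_pos hn, hHz n hn hHn, Real.sqrt_zero]
            · exact dif_neg hn),
        ← Fin.sum_univ_eq_sum_range]
      exact Finset.sum_congr rfl (fun r _ => by simp only [dif_pos r.isLt, Fin.eta])
    rw [hU, hV]
    ring

/-- Normalized left singular vectors (zero when the singular value is zero). -/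
noncomputable def dvec (S : Matrix (Fin M) (Fin N) ℝ) (r : Fin N) (i : Fin M) : ℝ :=
  (S *ᵥ evec S r) i / Real.sqrt (ev S r)

lemma dd (S : Matrix (Fin M) (Fin N) ℝ) (r s : Fin N) :
    ∑ i, dvec S r i * dvec S s i = if r = s then (if ev S r = 0 then 0 else 1) else 0 := by
  have h1 : ∑ i, dvec S r i * dvec S s i
      = (∑ i, (S *ᵥ evec S r) i * (S *ᵥ evec S s) i) / (Real.sqrt (ev S r) * Real.sqrt (ev S s)) := by
    rw [Finset.sum_div]
    exact Finset.sum_congr rfl (fun i _ => div_mul_div_comm _ _ _ _)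
  rw [h1, dot_Sv]
  by_cases hrs : r = s
  · subst hrs
    rw [if_pos rfl, if_pos rfl, mul_one]
    by_cases h0 : ev S r = 0
    · simp [h0]
    · rw [if_neg h0, Real.mul_self_sqrt (ev_nonneg S r)]
      exact div_self h0
  · rw [if_neg hrs, if_neg hrs, mul_zero, zero_div]

lemma dSv (S : Matrix (Fin M) (Fin N) ℝ) (r : Fin N) :
    ∑ i, dvec S r i * (S *ᵥ evec S r) i = Real.sqrt (ev S r) := by
  have h1 : ∑ i, dvec S r i * (S *ᵥ evec S r) i
      = (∑ i, (S *ᵥ evec S r) i * (S *ᵥ evec S r) i) / Real.sqrt (ev S r) := by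
    rw [Finset.sum_div]
    exact Finset.sum_congr rfl (fun i _ => by rw [dvec]; ring)
  rw [h1, dot_Sv, if_pos rfl, mul_one, Real.div_sqrt]

lemma sum_sq_expand {K L : ℕ} (p : Fin K → Fin L → ℝ) (q : Fin K → ℝ) :
    ∑ i : Fin L, (∑ r, p r i * q r) ^ 2 = ∑ r, ∑ s, (q r * q s) * (∑ i, p r i * p s i) := by
  have h1 : ∀ i, (∑ r, p r i * q r) ^ 2 = ∑ r, ∑ s, (p r i * q r) * (p s i * q s) := by
    intro i; rw [sq, Finset.sum_mul_sum]
  rw [Finset.sum_congr rfl (fun i _ => h1 i), Finset.sum_comm]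
  refine Finset.sum_congr rfl (fun r _ => ?_)
  rw [Finset.sum_comm]
  refine Finset.sum_congr rfl (fun s _ => ?_)
  rw [Finset.mul_sum]
  exact Finset.sum_congr rfl (fun i _ => by ring)

lemma key1 (S : Matrix (Fin M) (Fin N) ℝ) (x : Fin N → ℝ) :
    ∑ i, (∑ r, dvec S r i * (∑ j, evec S r j * x j)) ^ 2 ≤ ∑ j, (x j) ^ 2 := by
  set c : Fin N → ℝ := fun r => ∑ j, evec S r j * x j with hc
  calc ∑ i, (∑ r, dvec S r i * c r) ^ 2
      = ∑ r, ∑ s, (c r * c s) * (∑ i, dvec S r i * dvec S s i) := sum_sq_expand _ _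
    _ = ∑ r, (c r * c r) * (if ev S r = 0 then 0 else 1) := by
        refine Finset.sum_congr rfl (fun r _ => ?_)
        have : ∀ s, (c r * c s) * (∑ i, dvec S r i * dvec S s i)
            = if r = s then (c r * c r) * (if ev S r = 0 then 0 else 1) else 0 := by
          intro s
          rw [dd]
          by_cases hrs : r = s
          · subst hrs; simp
          · simp [hrs]
        rw [Finset.sum_congr rfl (fun s _ => this s), Finset.sum_ite_eq, if_pos (Finset.mem_univ r)]
    _ ≤ ∑ r, c r ^ 2 := by
        refine Finset.sum_le_sum (fun r _ => ?_)
        by_cases h0 : ev S r = 0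
        · simp [h0]; positivity
        · simp [h0, sq]
    _ = ∑ j, (x j) ^ 2 := by
        have e1 : ∀ r, c r ^ 2 = ∑ j, ∑ k, (x j * x k) * (evec S r j * evec S r k) := by
          intro r
          rw [hc]; rw [sq, Finset.sum_mul_sum]
          refine Finset.sum_congr rfl (fun j _ => ?_)
          refine Finset.sum_congr rfl (fun k _ => by ring)
        rw [Finset.sum_congr rfl (fun r _ => e1 r), Finset.sum_comm]
        refine Finset.sum_congr rfl (fun j _ => ?_)
        rw [Finset.sum_comm]
        have e2 : ∀ k, ∑ r, (x j * x k) * (evec S r j * evec S r k)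
            = (x j * x k) * (if j = k then 1 else 0) := by
          intro k
          rw [← evec_complete S j k, Finset.mul_sum]
        rw [Finset.sum_congr rfl (fun k _ => e2 k)]
        simp [Finset.sum_ite_eq', sq]

lemma lower_bound {H : ℕ} (S : Matrix (Fin M) (Fin N) ℝ) (U : Matrix (Fin M) (Fin H) ℝ)
    (V : Matrix (Fin N) (Fin H) ℝ) (hUV : U * Vᵀ = S) :
    nucNorm S ≤ (frobSq U + frobSq V) / 2 := by
  set T : ℝ := ∑ i, ∑ j, (∑ r, dvec S r i * evec S r j) * S i j with hT
  have TA : T = nucNorm S := by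
    rw [hT, nucNorm_eq]
    have h1 : ∀ i : Fin M, ∑ j, (∑ r, dvec S r i * evec S r j) * S i j
        = ∑ r, dvec S r i * (S *ᵥ evec S r) i := by
      intro i
      have e1 : ∀ j, (∑ r, dvec S r i * evec S r j) * S i j
          = ∑ r, dvec S r i * evec S r j * S i j := by
        intro j; rw [Finset.sum_mul]
      rw [Finset.sum_congr rfl (fun j _ => e1 j), Finset.sum_comm]
      refine Finset.sum_congr rfl (fun r _ => ?_)
      have : (S *ᵥ evec S r) i = ∑ j, S i j * evec S r j := rfl
      rw [this, Finset.mul_sum]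
      exact Finset.sum_congr rfl (fun j _ => by ring)
    rw [Finset.sum_congr rfl (fun i _ => h1 i), Finset.sum_comm]
    exact Finset.sum_congr rfl (fun r _ => dSv S r)
  have TB : T ≤ (frobSq U + frobSq V) / 2 := by
    have hS : ∀ i j, S i j = ∑ h, U i h * V j h := by
      intro i j
      rw [← hUV, Matrix.mul_apply]
      exact Finset.sum_congr rfl (fun h _ => rfl)
    set w : Fin H → Fin M → ℝ := fun h i => ∑ r, dvec S r i * (∑ j, evec S r j * V j h) with hw
    have hTw : T = ∑ h, ∑ i, U i h * w h i := by
      rw [hT]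
      have e1 : ∀ i, ∑ j, (∑ r, dvec S r i * evec S r j) * S i j
          = ∑ h, U i h * w h i := by
        intro i
        have e2 : ∀ j, (∑ r, dvec S r i * evec S r j) * S i j
            = ∑ h, ∑ r, dvec S r i * evec S r j * (U i h * V j h) := by
          intro j
          rw [hS i j, Finset.mul_sum]
          refine Finset.sum_congr rfl (fun h _ => ?_)
          rw [Finset.sum_mul]
        rw [Finset.sum_congr rfl (fun j _ => e2 j), Finset.sum_comm]
        refine Finset.sum_congr rfl (fun h _ => ?_)
        rw [hw]
        simp only
        rw [Finset.mul_sum, Finset.sum_comm]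
        refine Finset.sum_congr rfl (fun r _ => ?_)
        rw [Finset.mul_sum, Finset.mul_sum]
        exact Finset.sum_congr rfl (fun j _ => by ring)
      rw [Finset.sum_congr rfl (fun i _ => e1 i), Finset.sum_comm]
    have hUa : frobSq U = ∑ h, ∑ i, (U i h) ^ 2 := Finset.sum_comm
    have hVa : frobSq V = ∑ h, ∑ j, (V j h) ^ 2 := Finset.sum_comm
    rw [hTw, hUa, hVa, ← Finset.sum_add_distrib, Finset.sum_div]
    refine Finset.sum_le_sum (fun h _ => ?_)
    have c1 : ∑ i, U i h * w h i
        ≤ Real.sqrt (∑ i, (U i h) ^ 2) * Real.sqrt (∑ i, (w h i) ^ 2) :=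
      Real.sum_mul_le_sqrt_mul_sqrt _ _ _
    have c2 : Real.sqrt (∑ i, (w h i) ^ 2) ≤ Real.sqrt (∑ j, (V j h) ^ 2) :=
      Real.sqrt_le_sqrt (key1 S (fun j => V j h))
    have c3 : Real.sqrt (∑ i, (U i h) ^ 2) * Real.sqrt (∑ i, (w h i) ^ 2)
        ≤ Real.sqrt (∑ i, (U i h) ^ 2) * Real.sqrt (∑ j, (V j h) ^ 2) :=
      mul_le_mul_of_nonneg_left c2 (Real.sqrt_nonneg _)
    have hA : (0:ℝ) ≤ ∑ i, (U i h) ^ 2 := Finset.sum_nonneg (fun i _ => sq_nonneg _)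
    have hB : (0:ℝ) ≤ ∑ j, (V j h) ^ 2 := Finset.sum_nonneg (fun j _ => sq_nonneg _)
    have c4 : Real.sqrt (∑ i, (U i h) ^ 2) * Real.sqrt (∑ j, (V j h) ^ 2)
        ≤ (∑ i, (U i h) ^ 2 + ∑ j, (V j h) ^ 2) / 2 := by
      nlinarith [sq_nonneg (Real.sqrt (∑ i, (U i h) ^ 2) - Real.sqrt (∑ j, (V j h) ^ 2)),
        Real.sq_sqrt hA, Real.sq_sqrt hB]
    linarith
  linarith [TA, TB]

end NucAux

/-- The nuclear norm of `S` equals the minimum of `(frobSq U + frobSq V) / 2` over all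
factorizations `S = U * Vᵀ` with `H` latent columns, where `H ≥ rank S`; in particular
the minimum is attained. -/
theorem statement2 {M N : ℕ} (H : ℕ) (hH : 0 < H)
    (S : Matrix (Fin M) (Fin N) ℝ) (hrank : S.rank ≤ H) :
    IsLeast { c : ℝ | ∃ (U : Matrix (Fin M) (Fin H) ℝ) (V : Matrix (Fin N) (Fin H) ℝ),
        U * Vᵀ = S ∧ c = (frobSq U + frobSq V) / 2 }
      (nucNorm S) := by
  constructor
  · obtain ⟨U, V, h1, h2⟩ := NucAux.mem_part S hrank
    exact ⟨U, V, h1, h2⟩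
  · rintro c ⟨U, V, hUV, rfl⟩
    exact NucAux.lower_bound S U V hUV
end

section
/- Let X be an M×N real matrix, λ > 0, and H a positive integer. Then min over U: M×H and V: N×H of ‖X − U Vᵀ‖_F² + λ(‖U‖_F² + ‖V‖_F²) equals min over M×N matrices S with rank(S) ≤ H of ‖X − S‖_F² + 2λ‖S‖_*, and both minima are attained. Moreover, if (Û, V̂) attains the left-hand minimum, then Ŝ = Û V̂ᵀ attains the right-hand minimum. -/
open Matrix BigOperators

section NucEq
variable {M N : ℕ} (X : Matrix (Fin M) (Fin N) ℝ)

lemma card_nonzero_eig :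
    Fintype.card {i // (Matrix.isHermitian_conjTranspose_mul_self X).eigenvalues i ≠ 0} ≤ M := by
  rw [← (Matrix.isHermitian_conjTranspose_mul_self X).rank_eq_card_non_zero_eigs]
  rw [Matrix.conjTranspose_eq_transpose_of_trivial, Matrix.rank_transpose_mul_self]
  exact (Matrix.rank_le_card_height X).trans (by simp)

lemma sorted_eig_zero {r : Fin N} (hr : M ≤ (r : ℕ)) :
    ((Matrix.isHermitian_conjTranspose_mul_self X).eigenvalues ∘
      Tuple.sort ((Matrix.isHermitian_conjTranspose_mul_self X).eigenvalues)) r.rev = 0 := by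
  set μ := (Matrix.isHermitian_conjTranspose_mul_self X).eigenvalues with hμ
  set g := μ ∘ Tuple.sort μ with hg
  by_contra hne
  have hnonneg : ∀ k, 0 ≤ g k := fun k =>
    Matrix.eigenvalues_conjTranspose_mul_self_nonneg X _
  have hpos : 0 < g r.rev := lt_of_le_of_ne (hnonneg _) (Ne.symm hne)
  have hmono : Monotone g := Tuple.monotone_sort μ
  -- all k' ≥ r.rev have μ (sort k') ≠ 0
  have hsub : (Finset.Ici r.rev).image (Tuple.sort μ) ⊆
      Finset.univ.filter (fun i => μ i ≠ 0) := by
    intro i hi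
    simp only [Finset.mem_image, Finset.mem_Ici] at hi
    obtain ⟨k, hk, rfl⟩ := hi
    simp only [Finset.mem_filter, Finset.mem_univ, true_and]
    have : 0 < g k := lt_of_lt_of_le hpos (hmono hk)
    exact ne_of_gt this
  have hcard1 : ((Finset.Ici r.rev).image (Tuple.sort μ)).card = N - (r.rev : ℕ) := by
    rw [Finset.card_image_of_injective _ (Tuple.sort μ).injective, Fin.card_Ici]
  have hcard2 : (Finset.univ.filter (fun i => μ i ≠ 0)).card ≤ M := by
    have := card_nonzero_eig X
    rwa [Fintype.card_subtype] at this
  have := (Finset.card_le_card hsub).trans hcard2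
  rw [hcard1] at this
  have hrev : (r.rev : ℕ) = N - 1 - (r : ℕ) := Fin.val_rev r ▸ by omega
  have hrN : (r : ℕ) < N := r.2
  omega

lemma nucNorm_eq : nucNorm X =
    ∑ i, Real.sqrt ((Matrix.isHermitian_conjTranspose_mul_self X).eigenvalues i) := by
  set μ := (Matrix.isHermitian_conjTranspose_mul_self X).eigenvalues with hμ
  have h1 : nucNorm X = ∑ r ∈ Finset.range N, sval X r := by
    rw [nucNorm]
    refine Finset.sum_subset (Finset.range_subset_range.mpr (min_le_right _ _)) ?_
    intro r hr hr'
    simp only [Finset.mem_range] at hr hr'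
    have hM : M ≤ r := by omega
    rw [sval, dif_pos hr, svalAux, sorted_eig_zero X (r := ⟨r, hr⟩) hM, Real.sqrt_zero]
  rw [h1, Finset.sum_range fun r => sval X r]
  have h2 : ∀ i : Fin N, sval X (i : ℕ) = Real.sqrt ((μ ∘ Tuple.sort μ) i.rev) := by
    intro i; rw [sval, dif_pos i.2]; rfl
  simp only [h2]
  rw [Fintype.sum_bijective Fin.rev Fin.rev_bijective _
    (fun i => Real.sqrt ((μ ∘ Tuple.sort μ) i)) (fun i => rfl)]
  exact Fintype.sum_bijective (Tuple.sort μ) (Tuple.sort μ).bijective _ _ (fun i => rfl)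

end NucEq


section EigSetup
variable {n : ℕ} {B : Matrix (Fin n) (Fin n) ℝ} (hB : B.IsHermitian)

lemma eig_dot (i j : Fin n) :
    (⇑(hB.eigenvectorBasis i) : Fin n → ℝ) ⬝ᵥ ⇑(hB.eigenvectorBasis j)
      = if i = j then 1 else 0 := by
  have h := hB.eigenvectorBasis.orthonormal
  rw [orthonormal_iff_ite] at h
  have := h i j
  rw [EuclideanSpace.inner_eq_star_dotProduct] at this
  rw [dotProduct_comm]
  simpa using this

lemma eig_complete (l k : Fin n) :
    ∑ j, (hB.eigenvectorBasis j) l * (hB.eigenvectorBasis j) k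
      = if l = k then 1 else 0 := by
  have h : (hB.eigenvectorUnitary : Matrix (Fin n) (Fin n) ℝ) *
      star (hB.eigenvectorUnitary : Matrix (Fin n) (Fin n) ℝ) = 1 :=
    Matrix.mem_unitaryGroup_iff.mp (hB.eigenvectorUnitary).2
  have := congrFun (congrFun h l) k
  simpa [Matrix.mul_apply, Matrix.one_apply, Matrix.star_apply] using this

end EigSetup

section XSetup
variable {M N : ℕ} (X : Matrix (Fin M) (Fin N) ℝ)

lemma Xv_dot (i j : Fin N) :
    (X *ᵥ ⇑((Matrix.isHermitian_conjTranspose_mul_self X).eigenvectorBasis i)) ⬝ᵥ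
    (X *ᵥ ⇑((Matrix.isHermitian_conjTranspose_mul_self X).eigenvectorBasis j))
      = if i = j then (Matrix.isHermitian_conjTranspose_mul_self X).eigenvalues j else 0 := by
  set hX := Matrix.isHermitian_conjTranspose_mul_self X
  set a := (⇑(hX.eigenvectorBasis i) : Fin N → ℝ)
  set b := (⇑(hX.eigenvectorBasis j) : Fin N → ℝ)
  have h1 : (X *ᵥ a) ⬝ᵥ (X *ᵥ b) = a ⬝ᵥ ((Xᴴ * X) *ᵥ b) := by
    rw [Matrix.conjTranspose_eq_transpose_of_trivial, ← Matrix.mulVec_mulVec,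
      dotProduct_comm, Matrix.dotProduct_mulVec, ← Matrix.mulVec_transpose,
      dotProduct_comm]
  rw [h1, hX.mulVec_eigenvectorBasis j, dotProduct_smul, smul_eq_mul, eig_dot]
  by_cases h : i = j <;> simp [h]

lemma Xv_zero {j : Fin N}
    (hj : (Matrix.isHermitian_conjTranspose_mul_self X).eigenvalues j = 0) :
    X *ᵥ ⇑((Matrix.isHermitian_conjTranspose_mul_self X).eigenvectorBasis j) = 0 := by
  have h := Xv_dot X j j
  rw [if_pos rfl, hj] at h
  funext i
  have hn : ∀ k ∈ Finset.univ, (0:ℝ) ≤ (X *ᵥ ⇑((Matrix.isHermitian_conjTranspose_mul_self X).eigenvectorBasis j)) k ^2 := fun k _ => sq_nonneg _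
  have := (Finset.sum_eq_zero_iff_of_nonneg hn).mp (by
    rw [← h]; simp [dotProduct, pow_two]) i (Finset.mem_univ i)
  have := pow_eq_zero_iff (n := 2) (by norm_num) |>.mp this
  simpa using this
end XSetup


lemma dot_sum {m : ℕ} {ι : Type*} (s : Finset ι) (u : Fin m → ℝ) (f : ι → Fin m → ℝ) :
    u ⬝ᵥ (∑ i ∈ s, f i) = ∑ i ∈ s, u ⬝ᵥ (f i) := by
  simp only [dotProduct, Finset.sum_apply, Finset.mul_sum]
  exact Finset.sum_comm

lemma sum_dot {m : ℕ} {ι : Type*} (s : Finset ι) (u : Fin m → ℝ) (f : ι → Fin m → ℝ) :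
    (∑ i ∈ s, f i) ⬝ᵥ u = ∑ i ∈ s, (f i) ⬝ᵥ u := by
  simp only [dotProduct, Finset.sum_apply, Finset.sum_mul]
  exact Finset.sum_comm

lemma dot_self_nonneg {m : ℕ} (u : Fin m → ℝ) : 0 ≤ u ⬝ᵥ u :=
  Finset.sum_nonneg fun i _ => mul_self_nonneg _

lemma bessel {m : ℕ} {ι : Type*} [DecidableEq ι] (s : Finset ι) (p : ι → Fin m → ℝ)
    (horth : ∀ i ∈ s, ∀ j ∈ s, p i ⬝ᵥ p j = if i = j then 1 else 0) (u : Fin m → ℝ) :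
    ∑ i ∈ s, (p i ⬝ᵥ u) ^ 2 ≤ u ⬝ᵥ u := by
  classical
  set c : ι → ℝ := fun i => p i ⬝ᵥ u with hc
  set w : Fin m → ℝ := u - ∑ i ∈ s, c i • p i with hw
  have h1 : (∑ i ∈ s, c i • p i) ⬝ᵥ u = ∑ i ∈ s, c i ^ 2 := by
    rw [sum_dot]
    refine Finset.sum_congr rfl fun i hi => ?_
    rw [smul_dotProduct, smul_eq_mul, hc]; ring
  have h2 : u ⬝ᵥ (∑ i ∈ s, c i • p i) = ∑ i ∈ s, c i ^ 2 := by
    rw [dot_sum]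
    refine Finset.sum_congr rfl fun i hi => ?_
    rw [dotProduct_smul, smul_eq_mul, dotProduct_comm, hc]; ring
  have h3 : (∑ i ∈ s, c i • p i) ⬝ᵥ (∑ j ∈ s, c j • p j) = ∑ i ∈ s, c i ^ 2 := by
    rw [sum_dot]
    refine Finset.sum_congr rfl fun i hi => ?_
    rw [smul_dotProduct, smul_eq_mul, dot_sum]
    have he : ∀ j ∈ s, p i ⬝ᵥ (c j • p j) = if j = i then c i else 0 := by
      intro j hj
      rw [dotProduct_smul, smul_eq_mul, horth i hi j hj]
      by_cases h : i = j
      · subst h; simp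
      · simp [h, Ne.symm h]
    rw [Finset.sum_congr rfl he, Finset.sum_ite_eq' s i (fun _ => c i), if_pos hi]
    ring
  have key : w ⬝ᵥ w = u ⬝ᵥ u - ∑ i ∈ s, c i ^ 2 := by
    rw [hw, sub_dotProduct, dotProduct_sub, dotProduct_sub,
      h1, h2, h3]
    ring
  have h0 : 0 ≤ w ⬝ᵥ w := dot_self_nonneg w
  rw [key] at h0
  linarith


section KeyIneq
variable {M N K : ℕ} (U : Matrix (Fin M) (Fin K) ℝ) (V : Matrix (Fin N) (Fin K) ℝ)

lemma nucNorm_mul_le : 2 * nucNorm (U * Vᵀ) ≤ frobSq U + frobSq V := by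
  classical
  set A := U * Vᵀ with hA
  set μ := (Matrix.isHermitian_conjTranspose_mul_self A).eigenvalues with hμ
  set q : Fin N → Fin N → ℝ :=
    fun j => ⇑((Matrix.isHermitian_conjTranspose_mul_self A).eigenvectorBasis j) with hq
  have hμ0 : ∀ j, 0 ≤ μ j := fun j => Matrix.eigenvalues_conjTranspose_mul_self_nonneg A j
  set σ : Fin N → ℝ := fun j => Real.sqrt (μ j) with hσ
  have hσsq : ∀ j, σ j ^ 2 = μ j := fun j => Real.sq_sqrt (hμ0 j)
  set T : Finset (Fin N) := Finset.univ.filter (fun j => μ j ≠ 0) with hT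
  have hσpos : ∀ j ∈ T, 0 < σ j := by
    intro j hj
    simp only [hT, Finset.mem_filter] at hj
    exact Real.sqrt_pos.mpr (lt_of_le_of_ne (hμ0 j) (Ne.symm hj.2))
  set p : Fin N → Fin M → ℝ := fun j => (σ j)⁻¹ • (A *ᵥ q j) with hp
  -- nucNorm = sum over T
  have hnuc : nucNorm A = ∑ j ∈ T, σ j := by
    rw [nucNorm_eq]
    refine (Finset.sum_subset (Finset.subset_univ T) ?_).symm
    intro j _ hj
    simp only [hT, Finset.mem_filter, Finset.mem_univ, true_and, not_not] at hj
    rw [show (Matrix.isHermitian_conjTranspose_mul_self A).eigenvalues j = 0 from hj,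
      Real.sqrt_zero]
  -- orthonormality of p on T
  have horthp : ∀ i ∈ T, ∀ j ∈ T, p i ⬝ᵥ p j = if i = j then 1 else 0 := by
    intro i hi j hj
    rw [hp]
    simp only [smul_dotProduct, dotProduct_smul, smul_eq_mul]
    rw [Xv_dot A i j]
    by_cases h : i = j
    · subst h
      rw [if_pos rfl, if_pos rfl]
      have hpos := hσpos i hi
      have h2 : (σ i)⁻¹ * ((σ i)⁻¹ * μ i) = 1 := by
        rw [← hσsq i]; field_simp
      exact h2
    · simp [h]
  have horthq : ∀ i ∈ T, ∀ j ∈ T, q i ⬝ᵥ q j = if i = j then 1 else 0 := by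
    intro i _ j _; exact eig_dot _ i j
  -- σ j as dot product
  have hkey : ∀ j ∈ T, σ j = (Uᵀ *ᵥ p j) ⬝ᵥ (Vᵀ *ᵥ q j) := by
    intro j hj
    have h1 : p j ⬝ᵥ (A *ᵥ q j) = σ j := by
      rw [hp]
      simp only [smul_dotProduct, smul_eq_mul]
      rw [Xv_dot A j j, if_pos rfl]
      have hpos := hσpos j hj
      have h2 : (σ j)⁻¹ * μ j = σ j := by
        rw [← hσsq j]; field_simp
      exact h2
    have h2 : p j ⬝ᵥ (A *ᵥ q j) = (Uᵀ *ᵥ p j) ⬝ᵥ (Vᵀ *ᵥ q j) := by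
      rw [hA, ← Matrix.mulVec_mulVec, Matrix.dotProduct_mulVec, ← Matrix.mulVec_transpose]
    rw [← h1, h2]
  -- columns
  have hcolU : ∀ j ∈ T, (Uᵀ *ᵥ p j) ⬝ᵥ (Uᵀ *ᵥ p j) = ∑ h, (p j ⬝ᵥ (fun i => U i h)) ^ 2 := by
    intro j _
    simp only [dotProduct, Matrix.mulVec, Matrix.transpose_apply, pow_two]
    refine Finset.sum_congr rfl fun h _ => ?_
    rw [show (∑ i, U i h * p j i) = ∑ i, p j i * U i h from
      Finset.sum_congr rfl fun i _ => mul_comm _ _]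
  have hcolV : ∀ j ∈ T, (Vᵀ *ᵥ q j) ⬝ᵥ (Vᵀ *ᵥ q j) = ∑ h, (q j ⬝ᵥ (fun i => V i h)) ^ 2 := by
    intro j _
    simp only [dotProduct, Matrix.mulVec, Matrix.transpose_apply, pow_two]
    refine Finset.sum_congr rfl fun h _ => ?_
    rw [show (∑ i, V i h * q j i) = ∑ i, q j i * V i h from
      Finset.sum_congr rfl fun i _ => mul_comm _ _]
  have hbesU : ∑ j ∈ T, (Uᵀ *ᵥ p j) ⬝ᵥ (Uᵀ *ᵥ p j) ≤ frobSq U := by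
    rw [Finset.sum_congr rfl hcolU, Finset.sum_comm]
    have : frobSq U = ∑ h, (fun i => U i h) ⬝ᵥ (fun i => U i h) := by
      rw [frobSq, Finset.sum_comm]
      refine Finset.sum_congr rfl fun h _ => ?_
      simp [dotProduct, pow_two]
    rw [this]
    exact Finset.sum_le_sum fun h _ => bessel T p horthp _
  have hbesV : ∑ j ∈ T, (Vᵀ *ᵥ q j) ⬝ᵥ (Vᵀ *ᵥ q j) ≤ frobSq V := by
    rw [Finset.sum_congr rfl hcolV, Finset.sum_comm]
    have : frobSq V = ∑ h, (fun i => V i h) ⬝ᵥ (fun i => V i h) := by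
      rw [frobSq, Finset.sum_comm]
      refine Finset.sum_congr rfl fun h _ => ?_
      simp [dotProduct, pow_two]
    rw [this]
    exact Finset.sum_le_sum fun h _ => bessel T q horthq _
  -- AM-GM per term
  have hamgm : ∀ j ∈ T, 2 * σ j ≤ (Uᵀ *ᵥ p j) ⬝ᵥ (Uᵀ *ᵥ p j) + (Vᵀ *ᵥ q j) ⬝ᵥ (Vᵀ *ᵥ q j) := by
    intro j hj
    set a := Uᵀ *ᵥ p j
    set b := Vᵀ *ᵥ q j
    have h0 : 0 ≤ (a - b) ⬝ᵥ (a - b) := dot_self_nonneg _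
    have hexp : (a - b) ⬝ᵥ (a - b) = a ⬝ᵥ a - 2 * (a ⬝ᵥ b) + b ⬝ᵥ b := by
      rw [sub_dotProduct, dotProduct_sub, dotProduct_sub,
        dotProduct_comm b a]
      ring
    rw [hexp] at h0
    rw [hkey j hj]
    linarith
  calc 2 * nucNorm A = ∑ j ∈ T, 2 * σ j := by rw [hnuc, Finset.mul_sum]
    _ ≤ ∑ j ∈ T, ((Uᵀ *ᵥ p j) ⬝ᵥ (Uᵀ *ᵥ p j) + (Vᵀ *ᵥ q j) ⬝ᵥ (Vᵀ *ᵥ q j)) :=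
        Finset.sum_le_sum hamgm
    _ = (∑ j ∈ T, (Uᵀ *ᵥ p j) ⬝ᵥ (Uᵀ *ᵥ p j)) + ∑ j ∈ T, (Vᵀ *ᵥ q j) ⬝ᵥ (Vᵀ *ᵥ q j) :=
        Finset.sum_add_distrib
    _ ≤ frobSq U + frobSq V := add_le_add hbesU hbesV

end KeyIneq

section Factorization
variable {M N H : ℕ}

lemma exists_factorization (hH : 0 < H) (S : Matrix (Fin M) (Fin N) ℝ)
    (hrank : S.rank ≤ H) :
    ∃ (U : Matrix (Fin M) (Fin H) ℝ) (V : Matrix (Fin N) (Fin H) ℝ),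
      U * Vᵀ = S ∧ frobSq U = nucNorm S ∧ frobSq V = nucNorm S := by
  classical
  set μ := (Matrix.isHermitian_conjTranspose_mul_self S).eigenvalues with hμdef
  set q : Fin N → Fin N → ℝ :=
    fun j => ⇑((Matrix.isHermitian_conjTranspose_mul_self S).eigenvectorBasis j) with hq
  have hμ0 : ∀ j, 0 ≤ μ j := fun j => Matrix.eigenvalues_conjTranspose_mul_self_nonneg S j
  set σ : Fin N → ℝ := fun j => Real.sqrt (μ j) with hσ
  have hσ0 : ∀ j, 0 ≤ σ j := fun j => Real.sqrt_nonneg _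
  have hσsq : ∀ j, σ j ^ 2 = μ j := fun j => Real.sq_sqrt (hμ0 j)
  set τ : Fin N → ℝ := fun j => Real.sqrt (σ j) with hτ
  have hτsq : ∀ j, τ j ^ 2 = σ j := fun j => Real.sq_sqrt (hσ0 j)
  set T : Finset (Fin N) := Finset.univ.filter (fun j => μ j ≠ 0) with hT
  have hσpos : ∀ j ∈ T, 0 < σ j := by
    intro j hj
    simp only [hT, Finset.mem_filter] at hj
    exact Real.sqrt_pos.mpr (lt_of_le_of_ne (hμ0 j) (Ne.symm hj.2))
  have hτpos : ∀ j ∈ T, 0 < τ j := fun j hj => Real.sqrt_pos.mpr (hσpos j hj)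
  have hnucS : nucNorm S = ∑ j ∈ T, σ j := by
    rw [nucNorm_eq]
    refine (Finset.sum_subset (Finset.subset_univ T) ?_).symm
    intro j _ hj
    simp only [hT, Finset.mem_filter, Finset.mem_univ, true_and, not_not] at hj
    rw [show (Matrix.isHermitian_conjTranspose_mul_self S).eigenvalues j = 0 from hj,
      Real.sqrt_zero]
  -- injection from T into Fin H
  obtain ⟨f⟩ : Nonempty ({i // μ i ≠ 0} ↪ Fin H) := by
    apply Function.Embedding.nonempty_of_card_le
    rw [Fintype.card_fin]
    rw [← (Matrix.isHermitian_conjTranspose_mul_self S).rank_eq_card_non_zero_eigs,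
      Matrix.conjTranspose_eq_transpose_of_trivial, Matrix.rank_transpose_mul_self]
    exact hrank
  set e : Fin N → Fin H := fun j => if hj : μ j ≠ 0 then f ⟨j, hj⟩ else ⟨0, hH⟩ with he
  have hinj : ∀ j ∈ T, ∀ j' ∈ T, e j = e j' → j = j' := by
    intro j hj j' hj' hee
    simp only [hT, Finset.mem_filter] at hj hj'
    rw [he] at hee
    simp only [dif_pos hj.2, dif_pos hj'.2] at hee
    exact Subtype.mk_eq_mk.mp (f.injective hee)
  have hsingle : ∀ (h : Fin H), ∀ j ∈ T.filter (fun j => e j = h),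
      T.filter (fun j => e j = h) = {j} := by
    intro h j hj
    ext j'
    simp only [Finset.mem_filter, Finset.mem_singleton]
    constructor
    · rintro ⟨hj'T, hj'e⟩
      obtain ⟨hjT, hje⟩ := Finset.mem_filter.mp hj
      exact hinj j' hj'T j hjT (hj'e.trans hje.symm)
    · rintro rfl
      exact Finset.mem_filter.mp hj
  have hprod : ∀ (h : Fin H) (x y : Fin N → ℝ),
      (∑ j ∈ T.filter (fun j => e j = h), x j) * (∑ j ∈ T.filter (fun j => e j = h), y j)
        = ∑ j ∈ T.filter (fun j => e j = h), x j * y j := by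
    intro h x y
    rcases Finset.eq_empty_or_nonempty (T.filter (fun j => e j = h)) with hemp | ⟨j, hj⟩
    · simp [hemp]
    · rw [hsingle h j hj]; simp
  set U : Matrix (Fin M) (Fin H) ℝ :=
    fun i h => ∑ j ∈ T.filter (fun j => e j = h), (τ j)⁻¹ * (S *ᵥ q j) i with hU
  set V : Matrix (Fin N) (Fin H) ℝ :=
    fun i h => ∑ j ∈ T.filter (fun j => e j = h), τ j * q j i with hV
  have hSq0 : ∀ j ∉ T, S *ᵥ q j = 0 := by
    intro j hj
    simp only [hT, Finset.mem_filter, Finset.mem_univ, true_and, not_not] at hj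
    exact Xv_zero S hj
  refine ⟨U, V, ?_, ?_, ?_⟩
  · -- U * Vᵀ = S
    ext i k
    rw [Matrix.mul_apply]
    have step1 : ∀ h : Fin H, U i h * Vᵀ h k
        = ∑ j ∈ T.filter (fun j => e j = h), (S *ᵥ q j) i * q j k := by
      intro h
      rw [Matrix.transpose_apply]
      simp only [hU, hV]
      rw [hprod h _ _]
      refine Finset.sum_congr rfl fun j hj => ?_
      have := hτpos j (Finset.mem_filter.mp hj).1
      field_simp
    rw [Finset.sum_congr rfl fun h _ => step1 h]
    rw [Finset.sum_fiberwise_of_maps_to (fun j _ => Finset.mem_univ (e j))]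
    have step2 : ∑ j ∈ T, (S *ᵥ q j) i * q j k = ∑ j, (S *ᵥ q j) i * q j k := by
      refine Finset.sum_subset (Finset.subset_univ T) fun j _ hj => ?_
      rw [hSq0 j hj]; simp
    rw [step2]
    have h1 : ∀ j, (S *ᵥ q j) i * q j k = ∑ l, S i l * (q j l * q j k) := by
      intro j
      simp only [Matrix.mulVec, dotProduct, Finset.sum_mul]
      exact Finset.sum_congr rfl fun l _ => by ring
    simp only [h1]
    rw [Finset.sum_comm]
    have h2 : ∀ l, ∑ j, S i l * (q j l * q j k) = S i l * (if l = k then 1 else 0) := by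
      intro l
      rw [← Finset.mul_sum]
      congr 1
      simp only [hq]
      exact eig_complete _ l k
    simp only [h2, mul_ite, mul_one, mul_zero]
    simp
  · -- frobSq U = nucNorm S
    rw [frobSq, Finset.sum_comm]
    have hU1 : ∀ h : Fin H, ∑ i, U i h ^ 2 = ∑ j ∈ T.filter (fun j => e j = h),
        ∑ i, ((τ j)⁻¹ * (S *ᵥ q j) i) * ((τ j)⁻¹ * (S *ᵥ q j) i) := by
      intro h
      have hpt : ∀ i, U i h ^ 2 = ∑ j ∈ T.filter (fun j => e j = h),
          ((τ j)⁻¹ * (S *ᵥ q j) i) * ((τ j)⁻¹ * (S *ᵥ q j) i) := by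
        intro i
        rw [pow_two, hU]
        exact hprod h _ _
      simp only [hpt]
      exact Finset.sum_comm
    simp only [hU1]
    rw [Finset.sum_fiberwise_of_maps_to (fun j _ => Finset.mem_univ (e j))]
    rw [hnucS]
    refine Finset.sum_congr rfl fun j hj => ?_
    have hsum : ∑ i, ((τ j)⁻¹ * (S *ᵥ q j) i) * ((τ j)⁻¹ * (S *ᵥ q j) i)
        = (τ j)⁻¹ * (τ j)⁻¹ * ((S *ᵥ q j) ⬝ᵥ (S *ᵥ q j)) := by
      simp only [dotProduct, Finset.mul_sum]
      exact Finset.sum_congr rfl fun i _ => by ring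
    rw [hsum, Xv_dot S j j, if_pos rfl]
    show (τ j)⁻¹ * (τ j)⁻¹ * μ j = σ j
    have := hτpos j hj
    rw [← hσsq j, ← hτsq j]
    field_simp
  · -- frobSq V = nucNorm S
    rw [frobSq, Finset.sum_comm]
    have hV1 : ∀ h : Fin H, ∑ i, V i h ^ 2 = ∑ j ∈ T.filter (fun j => e j = h),
        ∑ i, (τ j * q j i) * (τ j * q j i) := by
      intro h
      have hpt : ∀ i, V i h ^ 2 = ∑ j ∈ T.filter (fun j => e j = h),
          (τ j * q j i) * (τ j * q j i) := by
        intro i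
        rw [pow_two, hV]
        exact hprod h _ _
      simp only [hpt]
      exact Finset.sum_comm
    simp only [hV1]
    rw [Finset.sum_fiberwise_of_maps_to (fun j _ => Finset.mem_univ (e j))]
    rw [hnucS]
    refine Finset.sum_congr rfl fun j hj => ?_
    have hsum : ∑ i, (τ j * q j i) * (τ j * q j i)
        = τ j * τ j * (q j ⬝ᵥ q j) := by
      simp only [dotProduct, Finset.mul_sum]
      exact Finset.sum_congr rfl fun i _ => by ring
    rw [hsum]
    have hqq : q j ⬝ᵥ q j = 1 := by
      simp only [hq]
      rw [eig_dot _ j j, if_pos rfl]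
    rw [hqq, mul_one, ← hτsq j]
    ring

end Factorization

section MinExists
variable {M N H : ℕ}

lemma frobSq_nonneg (A : Matrix (Fin M) (Fin N) ℝ) : 0 ≤ frobSq A :=
  Finset.sum_nonneg fun i _ => Finset.sum_nonneg fun j _ => sq_nonneg _

lemma entry_sq_le_frobSq (A : Matrix (Fin M) (Fin N) ℝ) (i : Fin M) (j : Fin N) :
    A i j ^ 2 ≤ frobSq A := by
  rw [frobSq]
  have h1 : A i j ^ 2 ≤ ∑ j', A i j' ^ 2 :=
    Finset.single_le_sum (f := fun j' => A i j' ^ 2) (fun _ _ => sq_nonneg _)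
      (Finset.mem_univ j)
  have h2 : ∑ j', A i j' ^ 2 ≤ ∑ i', ∑ j', A i' j' ^ 2 :=
    Finset.single_le_sum (f := fun i' => ∑ j', A i' j' ^ 2)
      (fun i' _ => Finset.sum_nonneg fun j' _ => sq_nonneg _) (Finset.mem_univ i)
  linarith

lemma exists_global_min (X : Matrix (Fin M) (Fin N) ℝ) (lam : ℝ) (hlam : 0 < lam) :
    ∃ (U₀ : Matrix (Fin M) (Fin H) ℝ) (V₀ : Matrix (Fin N) (Fin H) ℝ),
      ∀ (U : Matrix (Fin M) (Fin H) ℝ) (V : Matrix (Fin N) (Fin H) ℝ),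
        frobSq (X - U₀ * V₀ᵀ) + lam * (frobSq U₀ + frobSq V₀)
          ≤ frobSq (X - U * Vᵀ) + lam * (frobSq U + frobSq V) := by
  classical
  set P := ((Fin M → Fin H → ℝ) × (Fin N → Fin H → ℝ)) with hP
  set G : P → ℝ := fun p =>
    frobSq (X - Matrix.of p.1 * (Matrix.of p.2)ᵀ) +
      lam * (frobSq (Matrix.of p.1) + frobSq (Matrix.of p.2)) with hG
  have hGeq : G = fun p : P =>
      (∑ i, ∑ j, (X i j - ∑ h, p.1 i h * p.2 j h) ^ 2)
        + lam * ((∑ i, ∑ h, (p.1 i h) ^ 2) + (∑ j, ∑ h, (p.2 j h) ^ 2)) := by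
    funext p
    simp [hG, frobSq, Matrix.sub_apply, Matrix.mul_apply, Matrix.transpose_apply]
  have hcont : Continuous G := by
    rw [hGeq]
    have hc1 : ∀ (i : Fin M) (h : Fin H), Continuous fun p : P => p.1 i h := fun i h =>
      (continuous_apply h).comp ((continuous_apply i).comp continuous_fst)
    have hc2 : ∀ (j : Fin N) (h : Fin H), Continuous fun p : P => p.2 j h := fun j h =>
      (continuous_apply h).comp ((continuous_apply j).comp continuous_snd)
    apply Continuous.add
    · apply continuous_finset_sum
      intro i _
      apply continuous_finset_sum
      intro j _
      exact ((continuous_const.sub (continuous_finset_sum _ fun h _ =>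
        (hc1 i h).mul (hc2 j h))).pow 2)
    · apply Continuous.mul continuous_const
      apply Continuous.add
      · exact continuous_finset_sum _ fun i _ => continuous_finset_sum _ fun h _ =>
          (hc1 i h).pow 2
      · exact continuous_finset_sum _ fun j _ => continuous_finset_sum _ fun h _ =>
          (hc2 j h).pow 2
  set R : ℝ := Real.sqrt (frobSq X / lam) with hR
  have hR0 : 0 ≤ R := Real.sqrt_nonneg _
  set K : Set P := Metric.closedBall 0 R with hK
  have hKc : IsCompact K := isCompact_closedBall 0 R
  have hKne : K.Nonempty := ⟨0, Metric.mem_closedBall_self hR0⟩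
  -- points with small objective lie in K
  have hball : ∀ p : P, G p ≤ frobSq X → p ∈ K := by
    intro p hp
    have hp' : frobSq (X - Matrix.of p.1 * (Matrix.of p.2)ᵀ)
        + lam * (frobSq (Matrix.of p.1) + frobSq (Matrix.of p.2)) ≤ frobSq X := hp
    have hfs : frobSq (Matrix.of p.1) + frobSq (Matrix.of p.2) ≤ frobSq X / lam := by
      have h1 : 0 ≤ frobSq (X - Matrix.of p.1 * (Matrix.of p.2)ᵀ) := frobSq_nonneg _
      rw [le_div_iff₀ hlam]
      nlinarith
    have hent : ∀ (a : ℝ), a ^ 2 ≤ frobSq X / lam → |a| ≤ R := by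
      intro a ha
      rw [hR, ← Real.sqrt_sq_eq_abs]
      exact Real.sqrt_le_sqrt ha
    rw [hK, Metric.mem_closedBall, dist_zero_right]
    rw [Prod.norm_def]
    apply max_le
    · rw [pi_norm_le_iff_of_nonneg hR0]
      intro i
      rw [pi_norm_le_iff_of_nonneg hR0]
      intro h
      rw [Real.norm_eq_abs]
      apply hent
      have := entry_sq_le_frobSq (Matrix.of p.1) i h
      have h2 := frobSq_nonneg (Matrix.of p.2)
      calc p.1 i h ^ 2 ≤ frobSq (Matrix.of p.1) := this
        _ ≤ frobSq X / lam := by linarith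
    · rw [pi_norm_le_iff_of_nonneg hR0]
      intro j
      rw [pi_norm_le_iff_of_nonneg hR0]
      intro h
      rw [Real.norm_eq_abs]
      apply hent
      have := entry_sq_le_frobSq (Matrix.of p.2) j h
      have h1 := frobSq_nonneg (Matrix.of p.1)
      calc p.2 j h ^ 2 ≤ frobSq (Matrix.of p.2) := this
        _ ≤ frobSq X / lam := by linarith
  have hG0 : G 0 = frobSq X := by
    show frobSq (X - Matrix.of (0 : P).1 * (Matrix.of (0 : P).2)ᵀ)
        + lam * (frobSq (Matrix.of (0 : P).1) + frobSq (Matrix.of (0 : P).2)) = frobSq X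
    have h1 : (Matrix.of (0 : P).1 : Matrix (Fin M) (Fin H) ℝ) = 0 := rfl
    have h2 : (Matrix.of (0 : P).2 : Matrix (Fin N) (Fin H) ℝ) = 0 := rfl
    rw [h1, h2]
    have h4 : frobSq (0 : Matrix (Fin M) (Fin H) ℝ) = 0 := by simp [frobSq]
    have h3 : frobSq (0 : Matrix (Fin N) (Fin H) ℝ) = 0 := by simp [frobSq]
    simp [h4, h3]
  obtain ⟨p₀, hp₀K, hp₀⟩ := hKc.exists_isMinOn hKne hcont.continuousOn
  have hglobal : ∀ p : P, G p₀ ≤ G p := by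
    intro p
    by_cases hp : G p ≤ frobSq X
    · exact hp₀ (hball p hp)
    · push_neg at hp
      have h0K : (0 : P) ∈ K := Metric.mem_closedBall_self hR0
      have h5 : G p₀ ≤ G 0 := hp₀ h0K
      rw [hG0] at h5
      linarith [h5, hp]
  refine ⟨Matrix.of p₀.1, Matrix.of p₀.2, ?_⟩
  intro U V
  exact hglobal (U, V)

end MinExists

lemma rank_mul_transpose_le {M N H : ℕ} (U : Matrix (Fin M) (Fin H) ℝ)
    (V : Matrix (Fin N) (Fin H) ℝ) : (U * Vᵀ).rank ≤ H :=
  (Matrix.rank_mul_le_left U Vᵀ).trans ((Matrix.rank_le_card_width U).trans (by simp))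

/-- **Proposition 3.** The L2-penalized factorization objective and the nuclear-norm
penalized rank-constrained objective have the same (attained) minimum value, and any
minimizing factorization yields a minimizer of the latter objective. -/
theorem statement3 {M N : ℕ} (X : Matrix (Fin M) (Fin N) ℝ)
    (lam : ℝ) (hlam : 0 < lam) (H : ℕ) (hH : 0 < H) :
    ∃ m : ℝ,
      IsLeast { c : ℝ | ∃ (U : Matrix (Fin M) (Fin H) ℝ) (V : Matrix (Fin N) (Fin H) ℝ),
          c = frobSq (X - U * Vᵀ) + lam * (frobSq U + frobSq V) } m ∧
      IsLeast { c : ℝ | ∃ S : Matrix (Fin M) (Fin N) ℝ, S.rank ≤ H ∧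
          c = frobSq (X - S) + 2 * lam * nucNorm S } m ∧
      ∀ (U : Matrix (Fin M) (Fin H) ℝ) (V : Matrix (Fin N) (Fin H) ℝ),
        frobSq (X - U * Vᵀ) + lam * (frobSq U + frobSq V) = m →
          (U * Vᵀ).rank ≤ H ∧
          frobSq (X - U * Vᵀ) + 2 * lam * nucNorm (U * Vᵀ) = m := by
  obtain ⟨U₀, V₀, hmin⟩ := exists_global_min (H := H) X lam hlam
  set m : ℝ := frobSq (X - U₀ * V₀ᵀ) + lam * (frobSq U₀ + frobSq V₀) with hm
  refine ⟨m, ?_, ?_, ?_⟩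
  case _ =>
    constructor
    · exact ⟨U₀, V₀, rfl⟩
    · rintro c ⟨U, V, rfl⟩
      exact hmin U V
  -- lower bound for right set, proved first as used twice
  all_goals {
    have hRlb : ∀ c ∈ { c : ℝ | ∃ S : Matrix (Fin M) (Fin N) ℝ, S.rank ≤ H ∧
        c = frobSq (X - S) + 2 * lam * nucNorm S }, m ≤ c := by
      rintro c ⟨S, hrank, rfl⟩
      obtain ⟨U, V, hUV, hfU, hfV⟩ := exists_factorization hH S hrank
      have h1 := hmin U V
      rw [hUV, hfU, hfV] at h1
      calc m ≤ frobSq (X - S) + lam * (nucNorm S + nucNorm S) := h1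
        _ = frobSq (X - S) + 2 * lam * nucNorm S := by ring
    have hopt : ∀ (U : Matrix (Fin M) (Fin H) ℝ) (V : Matrix (Fin N) (Fin H) ℝ),
        frobSq (X - U * Vᵀ) + lam * (frobSq U + frobSq V) = m →
          (U * Vᵀ).rank ≤ H ∧
          frobSq (X - U * Vᵀ) + 2 * lam * nucNorm (U * Vᵀ) = m := by
      intro U V hUVm
      refine ⟨rank_mul_transpose_le U V, ?_⟩
      have hub : frobSq (X - U * Vᵀ) + 2 * lam * nucNorm (U * Vᵀ) ≤ m := by
        have hkey := nucNorm_mul_le U V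
        have h2 : 2 * lam * nucNorm (U * Vᵀ) ≤ lam * (frobSq U + frobSq V) := by
          nlinarith
        linarith [hUVm.ge, h2, hUVm.le]
      have hlb : m ≤ frobSq (X - U * Vᵀ) + 2 * lam * nucNorm (U * Vᵀ) :=
        hRlb _ ⟨U * Vᵀ, rank_mul_transpose_le U V, rfl⟩
      linarith
    first
    | (refine ⟨?_, hRlb⟩
       obtain ⟨hr, hv⟩ := hopt U₀ V₀ rfl
       exact ⟨U₀ * V₀ᵀ, hr, hv.symm⟩)
    | exact hopt
  }
end

section
/- Let X be an M×N real matrix, σ > 0, λ > 0, and H a positive integer. Consider the (unnormalized) posterior density of the model in which U: M×H and V: N×H have independent Normal(0, σ²/λ) entries and X = U Vᵀ + E with E having independent Normal(0, σ²) entries, namely π(U,V) = exp( −(1/(2σ²)) ( ‖X − U Vᵀ‖_F² + λ‖U‖_F² + λ‖V‖_F² ) ). If (Û, V̂) is a global maximizer of π over all pairs (U: M×H, V: N×H), then Ŝ = Û V̂ᵀ attains the minimum of ‖X − S‖_F² + 2λ‖S‖_* over all M×N matrices S with rank(S) ≤ H. -/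
open Matrix BigOperators

namespace Stmt4Aux

variable {M N : ℕ}

noncomputable def eg (S : Matrix (Fin M) (Fin N) ℝ) : Fin N → ℝ :=
  (Matrix.isHermitian_conjTranspose_mul_self S).eigenvalues

noncomputable def sv (S : Matrix (Fin M) (Fin N) ℝ) : Fin N → ℝ :=
  fun i => Real.sqrt (eg S i)

noncomputable def Qm (S : Matrix (Fin M) (Fin N) ℝ) : Matrix (Fin N) (Fin N) ℝ :=
  ((Matrix.isHermitian_conjTranspose_mul_self S).eigenvectorUnitary : Matrix (Fin N) (Fin N) ℝ)

noncomputable def Pm (S : Matrix (Fin M) (Fin N) ℝ) : Matrix (Fin M) (Fin N) ℝ :=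
  S * Qm S * Matrix.diagonal (fun i => (sv S i)⁻¹)

variable (S : Matrix (Fin M) (Fin N) ℝ)

lemma eg_nonneg (i : Fin N) : 0 ≤ eg S i := by
  have h : (Sᵀ * S).PosSemidef := by
    have := Matrix.posSemidef_conjTranspose_mul_self S
    rwa [Matrix.conjTranspose_eq_transpose_of_trivial] at this
  exact (Matrix.posSemidef_conjTranspose_mul_self S).eigenvalues_nonneg i

lemma sv_nonneg (i : Fin N) : 0 ≤ sv S i := Real.sqrt_nonneg _

lemma sv_sq (i : Fin N) : sv S i ^ 2 = eg S i := Real.sq_sqrt (eg_nonneg S i)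

lemma sv_eq_zero_iff (i : Fin N) : sv S i = 0 ↔ eg S i = 0 :=
  Real.sqrt_eq_zero (eg_nonneg S i)

lemma QtQ : (Qm S)ᵀ * Qm S = 1 := by
  have h := (Matrix.mem_unitaryGroup_iff').mp
    ((Matrix.isHermitian_conjTranspose_mul_self S).eigenvectorUnitary).2
  rwa [Matrix.star_eq_conjTranspose, Matrix.conjTranspose_eq_transpose_of_trivial] at h

lemma QQt : Qm S * (Qm S)ᵀ = 1 := by
  have h := (Matrix.mem_unitaryGroup_iff).mp
    ((Matrix.isHermitian_conjTranspose_mul_self S).eigenvectorUnitary).2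
  simp only [Matrix.star_eq_conjTranspose, Matrix.conjTranspose_eq_transpose_of_trivial] at h
  exact h

lemma Qt_mul_Q_mul {K : ℕ} (B : Matrix (Fin N) (Fin K) ℝ) :
    (Qm S)ᵀ * (Qm S * B) = B := by rw [← Matrix.mul_assoc, QtQ, Matrix.one_mul]

lemma Q_mul_Qt_mul {K : ℕ} (B : Matrix (Fin N) (Fin K) ℝ) :
    Qm S * ((Qm S)ᵀ * B) = B := by rw [← Matrix.mul_assoc, QQt, Matrix.one_mul]

lemma spectral : Sᵀ * S = Qm S * Matrix.diagonal (eg S) * (Qm S)ᵀ := by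
  have h := (Matrix.isHermitian_conjTranspose_mul_self S).spectral_theorem
  simp only [Matrix.star_eq_conjTranspose, Matrix.conjTranspose_eq_transpose_of_trivial,
    RCLike.ofReal_real_eq_id, Function.id_comp] at h
  exact h

lemma BtB : (S * Qm S)ᵀ * (S * Qm S) = Matrix.diagonal (eg S) := by
  have h : Sᵀ * (S * Qm S) = Qm S * Matrix.diagonal (eg S) := by
    rw [← Matrix.mul_assoc, spectral, Matrix.mul_assoc, QtQ, Matrix.mul_one]
  rw [Matrix.transpose_mul, Matrix.mul_assoc, h, Qt_mul_Q_mul]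

lemma col_zero {i : Fin N} (h : eg S i = 0) (j : Fin M) : (S * Qm S) j i = 0 := by
  have h2 : ∑ j, ((S * Qm S) j i) * ((S * Qm S) j i) = eg S i := by
    have := congrFun (congrFun (BtB S) i) i
    rw [Matrix.mul_apply] at this
    simp only [Matrix.transpose_apply, Matrix.diagonal_apply_eq] at this
    exact this
  have h3 := (Finset.sum_eq_zero_iff_of_nonneg
    (fun j _ => mul_self_nonneg ((S * Qm S) j i))).mp (by rw [h2, h])
  exact mul_self_eq_zero.mp (h3 j (Finset.mem_univ j))

noncomputable def chi (S : Matrix (Fin M) (Fin N) ℝ) : Fin N → ℝ :=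
  fun i => if eg S i = 0 then 0 else 1

lemma SQ_eq_P_mul : S * Qm S = Pm S * Matrix.diagonal (sv S) := by
  rw [Pm, Matrix.mul_assoc, Matrix.diagonal_mul_diagonal]
  ext j i
  rw [Matrix.mul_diagonal]
  by_cases h : eg S i = 0
  · rw [col_zero S h, zero_mul]
  · have hs : sv S i ≠ 0 := fun hc => h ((sv_eq_zero_iff S i).mp hc)
    rw [inv_mul_cancel₀ hs, mul_one]

lemma S_eq : S = Pm S * Matrix.diagonal (sv S) * (Qm S)ᵀ := by
  rw [← SQ_eq_P_mul, Matrix.mul_assoc, QQt, Matrix.mul_one]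

lemma PtP : (Pm S)ᵀ * Pm S = Matrix.diagonal (chi S) := by
  rw [Pm, Matrix.transpose_mul, Matrix.diagonal_transpose, Matrix.mul_assoc,
    ← Matrix.mul_assoc ((S * Qm S)ᵀ), BtB, Matrix.diagonal_mul_diagonal,
    Matrix.diagonal_mul_diagonal]
  refine congrArg Matrix.diagonal (funext fun i => ?_)
  show (sv S i)⁻¹ * (eg S i * (sv S i)⁻¹) = chi S i
  by_cases h : eg S i = 0
  · simp [chi, h]
  · have hs : sv S i ≠ 0 := fun hc => h ((sv_eq_zero_iff S i).mp hc)
    have he : eg S i = sv S i * sv S i := by rw [← sv_sq]; ring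
    simp only [chi, if_neg h, he]
    field_simp
    simp [hs]

lemma P_mul_chi : Pm S * Matrix.diagonal (chi S) = Pm S := by
  ext j i
  rw [Matrix.mul_diagonal]
  by_cases h : eg S i = 0
  · have hP : Pm S j i = 0 := by
      rw [Pm, Matrix.mul_diagonal, (sv_eq_zero_iff S i).mpr h]
      simp
    simp [hP]
  · simp [chi, h]

lemma trace_Pt_SQ : Matrix.trace ((Pm S)ᵀ * (S * Qm S)) = ∑ i, sv S i := by
  have h : (Pm S)ᵀ * (S * Qm S) = Matrix.diagonal (fun i => (sv S i)⁻¹ * eg S i) := by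
    rw [Pm, Matrix.transpose_mul, Matrix.diagonal_transpose, Matrix.mul_assoc, BtB,
      Matrix.diagonal_mul_diagonal]
  rw [h, Matrix.trace_diagonal]
  refine Finset.sum_congr rfl fun i _ => ?_
  by_cases hz : eg S i = 0
  · rw [hz, mul_zero, sv, hz, Real.sqrt_zero]
  · have hs : sv S i ≠ 0 := fun hc => hz ((sv_eq_zero_iff S i).mp hc)
    rw [← sv_sq S i]
    field_simp

lemma frobSq_eq_trace_tmul {m n : ℕ} (B : Matrix (Fin m) (Fin n) ℝ) :
    frobSq B = Matrix.trace (Bᵀ * B) := by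
  rw [frobSq, Matrix.trace]
  rw [Finset.sum_comm]
  refine Finset.sum_congr rfl fun i _ => ?_
  simp [Matrix.diag, Matrix.mul_apply, sq]

lemma frobSq_eq_trace_mult {m n : ℕ} (B : Matrix (Fin m) (Fin n) ℝ) :
    frobSq B = Matrix.trace (B * Bᵀ) := by
  rw [frobSq, Matrix.trace]
  refine Finset.sum_congr rfl fun i _ => ?_
  simp [Matrix.diag, Matrix.mul_apply, sq]

lemma frobSq_nonneg {m n : ℕ} (B : Matrix (Fin m) (Fin n) ℝ) : 0 ≤ frobSq B :=
  Finset.sum_nonneg fun _ _ => Finset.sum_nonneg fun _ _ => sq_nonneg _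

lemma frobSq_eq_sum_eg : frobSq S = ∑ i, eg S i := by
  rw [frobSq_eq_trace_tmul, spectral, Matrix.trace_mul_comm, ← Matrix.mul_assoc, QtQ,
    Matrix.one_mul, Matrix.trace_diagonal]

lemma eg_sort_zero {j : Fin N} (hj : (j : ℕ) + S.rank < N) :
    eg S (Tuple.sort (eg S) j) = 0 := by
  by_contra hne
  have hpos : 0 < eg S (Tuple.sort (eg S) j) :=
    lt_of_le_of_ne (eg_nonneg S _) (Ne.symm hne)
  have hmono := Tuple.monotone_sort (eg S)
  have hsub : Finset.Ici j ⊆ Finset.univ.filter (fun i => eg S (Tuple.sort (eg S) i) ≠ 0) := by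
    intro i hi
    refine Finset.mem_filter.mpr ⟨Finset.mem_univ _, ?_⟩
    have h := hmono (Finset.mem_Ici.mp hi)
    exact (lt_of_lt_of_le hpos h).ne'
  have h1 : N - (j : ℕ) ≤
      (Finset.univ.filter (fun i => eg S (Tuple.sort (eg S) i) ≠ 0)).card := by
    have h := Finset.card_le_card hsub
    rwa [Fin.card_Ici] at h
  have h2 : (Finset.univ.filter (fun i => eg S (Tuple.sort (eg S) i) ≠ 0)).card
      = (Finset.univ.filter (fun i => eg S i ≠ 0)).card := by
    rw [← Fintype.card_subtype, ← Fintype.card_subtype]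
    exact Fintype.card_congr ((Tuple.sort (eg S)).subtypeEquiv (fun i => Iff.rfl))
  have h3 : (Finset.univ.filter (fun i => eg S i ≠ 0)).card = S.rank := by
    have h4 : (Sᴴ * S).rank = S.rank := by
      rw [Matrix.conjTranspose_eq_transpose_of_trivial, Matrix.rank_transpose_mul_self]
    rw [← h4, (Matrix.isHermitian_conjTranspose_mul_self S).rank_eq_card_non_zero_eigs,
      Fintype.card_subtype]
    rfl
  have hjN : (j : ℕ) < N := j.isLt
  omega

lemma rank_le_min : S.rank ≤ min M N :=
  le_min (by simpa using S.rank_le_card_height) (by simpa using S.rank_le_card_width)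

lemma nucNorm_eq : nucNorm S = ∑ i, sv S i := by
  have hrank := rank_le_min S
  have hstep1 : nucNorm S = ∑ r ∈ Finset.range N, sval S r := by
    rw [nucNorm]
    refine Finset.sum_subset (Finset.range_subset_range.mpr (min_le_right M N)) ?_
    intro r hrN hrmin
    rw [Finset.mem_range] at hrN
    have hge : min M N ≤ r := le_of_not_gt (by simpa using hrmin)
    rw [sval, dif_pos hrN]
    have hz : eg S (Tuple.sort (eg S) (⟨r, hrN⟩ : Fin N).rev) = 0 := by
      apply eg_sort_zero
      have hv : (((⟨r, hrN⟩ : Fin N).rev : Fin N) : ℕ) = N - (r + 1) := Fin.val_rev _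
      have hr2 : S.rank ≤ r := le_trans hrank hge
      omega
    show Real.sqrt (eg S (Tuple.sort (eg S) (⟨r, hrN⟩ : Fin N).rev)) = 0
    rw [hz, Real.sqrt_zero]
  have hstep2 : ∑ r ∈ Finset.range N, sval S r = ∑ i : Fin N, svalAux S i := by
    rw [← Fin.sum_univ_eq_sum_range]
    refine Finset.sum_congr rfl fun i _ => ?_
    rw [sval, dif_pos i.isLt]
  have hstep3 : ∑ i : Fin N, svalAux S i = ∑ i, sv S i := by
    have e1 : ∑ i : Fin N, Real.sqrt (eg S (Tuple.sort (eg S) (Fin.revPerm i)))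
        = ∑ i : Fin N, Real.sqrt (eg S (Tuple.sort (eg S) i)) :=
      Equiv.sum_comp Fin.revPerm (fun i => Real.sqrt (eg S (Tuple.sort (eg S) i)))
    have e2 : ∑ i : Fin N, Real.sqrt (eg S (Tuple.sort (eg S) i))
        = ∑ i, Real.sqrt (eg S i) :=
      Equiv.sum_comp (Tuple.sort (eg S)) (fun i => Real.sqrt (eg S i))
    show ∑ i : Fin N, Real.sqrt (eg S (Tuple.sort (eg S) i.rev)) = ∑ i, sv S i
    rw [show (fun i : Fin N => Real.sqrt (eg S (Tuple.sort (eg S) i.rev)))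
        = (fun i : Fin N => Real.sqrt (eg S (Tuple.sort (eg S) (Fin.revPerm i)))) from rfl]
    rw [e1, e2]
    rfl
  rw [hstep1, hstep2, hstep3]

lemma exists_factor {H : ℕ} (h : S.rank ≤ H) :
    ∃ (U : Matrix (Fin M) (Fin H) ℝ) (V : Matrix (Fin N) (Fin H) ℝ),
      U * Vᵀ = S ∧ frobSq U = nucNorm S ∧ frobSq V = nucNorm S := by
  classical
  have hcard : Fintype.card {i // eg S i ≠ 0} ≤ Fintype.card (Fin H) := by
    rw [Fintype.card_fin]
    refine le_trans (le_of_eq ?_) h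
    have h4 : (Sᴴ * S).rank = S.rank := by
      rw [Matrix.conjTranspose_eq_transpose_of_trivial, Matrix.rank_transpose_mul_self]
    rw [← h4, (Matrix.isHermitian_conjTranspose_mul_self S).rank_eq_card_non_zero_eigs]
    rfl
  obtain ⟨e⟩ := Function.Embedding.nonempty_of_card_le hcard
  set E : Matrix (Fin N) (Fin H) ℝ :=
    fun i k => if hi : eg S i ≠ 0 then (if e ⟨i, hi⟩ = k then (1 : ℝ) else 0) else 0 with hE
  have hEEt : E * Eᵀ = Matrix.diagonal (chi S) := by
    ext i j
    rw [Matrix.mul_apply]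
    rcases eq_or_ne i j with rfl | hne
    · rw [Matrix.diagonal_apply_eq]
      by_cases hi : eg S i = 0
      · simp [hE, hi, chi]
      · simp only [Matrix.transpose_apply]
        simp only [hE, dif_pos (show eg S i ≠ 0 from hi)]
        rw [chi, if_neg hi]
        have hterm : ∀ k, (if e ⟨i, hi⟩ = k then (1:ℝ) else 0) *
            (if e ⟨i, hi⟩ = k then (1:ℝ) else 0) = if e ⟨i, hi⟩ = k then (1:ℝ) else 0 := by
          intro k; split <;> simp
        rw [Finset.sum_congr rfl fun k _ => hterm k, Finset.sum_ite_eq]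
        simp
    · rw [Matrix.diagonal_apply_ne _ hne]
      apply Finset.sum_eq_zero
      intro k _
      simp only [Matrix.transpose_apply]
      simp only [hE]
      by_cases hi : eg S i = 0
      · simp [hi]
      · by_cases hj : eg S j = 0
        · simp [hj]
        · rw [dif_pos (show eg S i ≠ 0 from hi), dif_pos (show eg S j ≠ 0 from hj)]
          by_cases h1 : e ⟨i, hi⟩ = k
          · by_cases h2 : e ⟨j, hj⟩ = k
            · exfalso
              have heq : (⟨i, hi⟩ : {i // eg S i ≠ 0}) = ⟨j, hj⟩ :=
                e.injective (h1.trans h2.symm)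
              exact hne (congrArg Subtype.val heq)
            · simp [h2]
          · simp [h1]
  set D : Matrix (Fin N) (Fin N) ℝ := Matrix.diagonal (fun i => Real.sqrt (sv S i)) with hD
  set F : Matrix (Fin N) (Fin H) ℝ := D * E with hF
  have hFFt : F * Fᵀ = Matrix.diagonal (sv S) := by
    have h1 : F * Fᵀ = D * (E * Eᵀ) * D := by
      rw [hF, Matrix.transpose_mul, hD, Matrix.diagonal_transpose]
      simp only [Matrix.mul_assoc]
    rw [h1, hEEt, hD, Matrix.diagonal_mul_diagonal, Matrix.diagonal_mul_diagonal]
    refine congrArg Matrix.diagonal (funext fun i => ?_)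
    by_cases hi : eg S i = 0
    · have hz : sv S i = 0 := (sv_eq_zero_iff S i).mpr hi
      simp [chi, hi, hz]
    · show Real.sqrt (sv S i) * chi S i * Real.sqrt (sv S i) = sv S i
      rw [chi, if_neg hi, mul_one, Real.mul_self_sqrt (sv_nonneg S i)]
  refine ⟨Pm S * F, Qm S * F, ?_, ?_, ?_⟩
  · rw [Matrix.transpose_mul, Matrix.mul_assoc, ← Matrix.mul_assoc F, hFFt,
      ← Matrix.mul_assoc, ← S_eq]
  · rw [frobSq_eq_trace_tmul, Matrix.transpose_mul, Matrix.mul_assoc,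
      ← Matrix.mul_assoc ((Pm S)ᵀ) (Pm S) F, PtP, Matrix.trace_mul_comm,
      Matrix.mul_assoc, hFFt, Matrix.diagonal_mul_diagonal, Matrix.trace_diagonal,
      nucNorm_eq]
    refine Finset.sum_congr rfl fun i _ => ?_
    by_cases hi : eg S i = 0
    · have hz : sv S i = 0 := (sv_eq_zero_iff S i).mpr hi
      simp [chi, hi, hz]
    · rw [chi, if_neg hi, one_mul]
  · rw [frobSq_eq_trace_tmul, Matrix.transpose_mul, Matrix.mul_assoc, Qt_mul_Q_mul,
      Matrix.trace_mul_comm, hFFt, Matrix.trace_diagonal, nucNorm_eq]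

lemma trace_transpose_mul {m n : ℕ} (A B : Matrix (Fin m) (Fin n) ℝ) :
    Matrix.trace (Aᵀ * B) = ∑ i, ∑ k, A k i * B k i := by
  rw [Matrix.trace]
  refine Finset.sum_congr rfl fun i _ => ?_
  simp [Matrix.diag, Matrix.mul_apply]

lemma two_nucNorm_le {H : ℕ} (U : Matrix (Fin M) (Fin H) ℝ) (V : Matrix (Fin N) (Fin H) ℝ) :
    2 * nucNorm (U * Vᵀ) ≤ frobSq U + frobSq V := by
  set S := U * Vᵀ with hS
  set A := Uᵀ * Pm S with hA
  set B := Vᵀ * Qm S with hB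
  have key : nucNorm S = Matrix.trace (Aᵀ * B) := by
    rw [nucNorm_eq, ← trace_Pt_SQ]
    congr 1
    rw [hA, hB, Matrix.transpose_mul, Matrix.transpose_transpose, hS]
    simp only [Matrix.mul_assoc]
  have hAB : 2 * Matrix.trace (Aᵀ * B) ≤ frobSq A + frobSq B := by
    rw [trace_transpose_mul]
    have hfa : frobSq A = ∑ i, ∑ k, (A k i) ^ 2 := by rw [frobSq, Finset.sum_comm]
    have hfb : frobSq B = ∑ i, ∑ k, (B k i) ^ 2 := by rw [frobSq, Finset.sum_comm]
    rw [hfa, hfb, Finset.mul_sum, ← Finset.sum_add_distrib]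
    refine Finset.sum_le_sum fun i _ => ?_
    rw [Finset.mul_sum, ← Finset.sum_add_distrib]
    refine Finset.sum_le_sum fun k _ => ?_
    nlinarith [sq_nonneg (A k i - B k i)]
  have hB2 : frobSq B = frobSq V := by
    calc frobSq B = Matrix.trace (Vᵀ * (Qm S * ((Qm S)ᵀ * V))) := by
          rw [frobSq_eq_trace_mult, hB, Matrix.transpose_mul, Matrix.transpose_transpose]
          simp only [Matrix.mul_assoc]
      _ = Matrix.trace (Vᵀ * V) := by rw [Q_mul_Qt_mul]
      _ = frobSq V := (frobSq_eq_trace_tmul V).symm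
  have hA2 : frobSq A ≤ frobSq U := by
    set G := Pm S * (Pm S)ᵀ with hG
    have hGG : G * G = G := by
      rw [hG, Matrix.mul_assoc, ← Matrix.mul_assoc ((Pm S)ᵀ), PtP, ← Matrix.mul_assoc,
        P_mul_chi]
    have hGt : Gᵀ = G := by rw [hG, Matrix.transpose_mul, Matrix.transpose_transpose]
    have hfA : frobSq A = Matrix.trace (G * (U * Uᵀ)) := by
      calc frobSq A = Matrix.trace (A * Aᵀ) := frobSq_eq_trace_mult A
        _ = Matrix.trace (Uᵀ * (G * U)) := by
            rw [hA, Matrix.transpose_mul, Matrix.transpose_transpose, hG]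
            simp only [Matrix.mul_assoc]
        _ = Matrix.trace (G * (U * Uᵀ)) := by
            rw [Matrix.trace_mul_comm]
            simp only [Matrix.mul_assoc]
    set R : Matrix (Fin M) (Fin M) ℝ := 1 - G with hR
    have hRt : Rᵀ = R := by rw [hR, Matrix.transpose_sub, Matrix.transpose_one, hGt]
    have hRR : R * R = R := by
      have hexp : (1 - G) * (1 - G) = 1 - G - G + G * G := by noncomm_ring
      rw [hR, hexp, hGG]
      abel
    have hpos : 0 ≤ Matrix.trace (R * (U * Uᵀ)) := by
      have hfr : Matrix.trace (R * (U * Uᵀ)) = frobSq (Uᵀ * R) := by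
        calc Matrix.trace (R * (U * Uᵀ)) = Matrix.trace (R * (R * (U * Uᵀ))) := by
              rw [← Matrix.mul_assoc R R (U * Uᵀ), hRR]
          _ = Matrix.trace ((R * (U * Uᵀ)) * R) := by
              rw [Matrix.trace_mul_comm]
          _ = Matrix.trace ((Uᵀ * R)ᵀ * (Uᵀ * R)) := by
              rw [Matrix.transpose_mul, Matrix.transpose_transpose, hRt]
              simp only [Matrix.mul_assoc]
          _ = frobSq (Uᵀ * R) := (frobSq_eq_trace_tmul _).symm
      rw [hfr]
      exact frobSq_nonneg _
    have hsplit : Matrix.trace (G * (U * Uᵀ)) + Matrix.trace (R * (U * Uᵀ)) = frobSq U := by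
      rw [← Matrix.trace_add, ← Matrix.add_mul]
      have hGR : G + R = 1 := by rw [hR]; abel
      rw [hGR, Matrix.one_mul, frobSq_eq_trace_mult]
    linarith [hfA, hpos, hsplit]
  linarith [key, hAB, hA2, hB2]

end Stmt4Aux

open Stmt4Aux

/-- **Corollary 1.** If `(Uh, Vh)` globally maximizes the (unnormalized) posterior density
of the Gaussian factor model, then `Uh * Vhᵀ` minimizes the nuclear-norm penalized least
squares objective over matrices of rank at most `H`. -/
theorem statement4 {M N : ℕ} (X : Matrix (Fin M) (Fin N) ℝ)
    (σ lam : ℝ) (hσ : 0 < σ) (hlam : 0 < lam) (H : ℕ) (hH : 0 < H)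
    (Uh : Matrix (Fin M) (Fin H) ℝ) (Vh : Matrix (Fin N) (Fin H) ℝ)
    (hmax : ∀ (U : Matrix (Fin M) (Fin H) ℝ) (V : Matrix (Fin N) (Fin H) ℝ),
      Real.exp (-(1 / (2 * σ ^ 2)) *
          (frobSq (X - U * Vᵀ) + lam * frobSq U + lam * frobSq V))
        ≤ Real.exp (-(1 / (2 * σ ^ 2)) *
          (frobSq (X - Uh * Vhᵀ) + lam * frobSq Uh + lam * frobSq Vh))) :
    (Uh * Vhᵀ).rank ≤ H ∧
      ∀ S : Matrix (Fin M) (Fin N) ℝ, S.rank ≤ H →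
        frobSq (X - Uh * Vhᵀ) + 2 * lam * nucNorm (Uh * Vhᵀ)
          ≤ frobSq (X - S) + 2 * lam * nucNorm S := by
  have hc : 0 < 1 / (2 * σ ^ 2) := by positivity
  have hmax' : ∀ (U : Matrix (Fin M) (Fin H) ℝ) (V : Matrix (Fin N) (Fin H) ℝ),
      frobSq (X - Uh * Vhᵀ) + lam * frobSq Uh + lam * frobSq Vh
        ≤ frobSq (X - U * Vᵀ) + lam * frobSq U + lam * frobSq V := by
    intro U V
    have h := Real.exp_le_exp.mp (hmax U V)
    have h3 : (1 / (2 * σ ^ 2)) *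
        (frobSq (X - Uh * Vhᵀ) + lam * frobSq Uh + lam * frobSq Vh)
        ≤ (1 / (2 * σ ^ 2)) *
        (frobSq (X - U * Vᵀ) + lam * frobSq U + lam * frobSq V) := by linarith
    exact le_of_mul_le_mul_left h3 hc
  constructor
  · calc (Uh * Vhᵀ).rank ≤ Uh.rank := Matrix.rank_mul_le_left Uh Vhᵀ
      _ ≤ Fintype.card (Fin H) := Uh.rank_le_card_width
      _ = H := Fintype.card_fin H
  · intro S hS
    obtain ⟨U, V, hUV, hU, hV⟩ := exists_factor S hS
    have h1 : 2 * nucNorm (Uh * Vhᵀ) ≤ frobSq Uh + frobSq Vh := two_nucNorm_le Uh Vh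
    have h2 := hmax' U V
    rw [hUV] at h2
    rw [hU, hV] at h2
    have h1l := mul_le_mul_of_nonneg_left h1 hlam.le
    linarith [h1l, h2, hU, hV]
end
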